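/- SGD convergence rate: under the one-step descent assumptions (F is L-smooth, unbiased stochastic gradients with variance ≤ σ², step size η < 2/L, F bounded below by F*), after T steps of θ_{t+1} = θ_t − η g_t: (1/T)Σ_{t=0}^{T−1} E[‖∇F(θ_t)‖²] ≤ 2(F(θ₀) − F*)/(ηT(2 − ηL)) + ηLσ²/(2 − ηL). -/

import Mathlib

open MeasureTheory RealInnerProductSpace

lemma descent_lemma {d : ℕ} (F : EuclideanSpace ℝ (Fin d) → ℝ) (L : ℝ) (hL : 0 ≤ L)
    (hdiff : Differentiable ℝ F)
    (hlip : ∀ x y, ‖gradient F x - gradient F y‖ ≤ L * ‖x - y‖)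
    (x y : EuclideanSpace ℝ (Fin d)) :
    F y ≤ F x + ⟪gradient F x, y - x⟫ + L / 2 * ‖y - x‖ ^ 2 := by
  set v := y - x with hv
  have hgc : Continuous (gradient F) :=
    (LipschitzWith.of_dist_le_mul (K := ⟨L, hL⟩) fun a b => by
      simp only [dist_eq_norm, NNReal.coe_mk]; exact hlip a b).continuous
  have hγ : Continuous (fun s : ℝ => x + s • v) := by continuity
  have hφ : ∀ s : ℝ, HasDerivAt (fun s : ℝ => F (x + s • v))
      ⟪gradient F (x + s • v), v⟫ s := by
    intro s
    have h1 : HasDerivAt (fun s : ℝ => x + s • v) v s := by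
      simpa using ((hasDerivAt_id s).smul_const v).const_add x
    have h2 : HasFDerivAt F
        ((InnerProductSpace.toDual ℝ (EuclideanSpace ℝ (Fin d))) (gradient F (x + s • v)))
        (x + s • v) := (hdiff (x + s • v)).hasGradientAt
    exact (h2.comp_hasDerivAt s h1).congr_deriv (by simp)
  have hcont : Continuous fun s : ℝ => ⟪gradient F (x + s • v), v⟫ :=
    (hgc.comp hγ).inner continuous_const
  have hcont2 : Continuous fun s : ℝ => ⟪gradient F (x + s • v) - gradient F x, v⟫ :=
    ((hgc.comp hγ).sub continuous_const).inner continuous_const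
  have hFTC : F (x + (1:ℝ) • v) - F (x + (0:ℝ) • v)
      = ∫ s in (0:ℝ)..1, ⟪gradient F (x + s • v), v⟫ :=
    (intervalIntegral.integral_eq_sub_of_hasDerivAt (fun s _ => hφ s)
      (hcont.intervalIntegrable _ _)).symm
  have h0 : x + (0:ℝ) • v = x := by simp
  have h1y : x + (1:ℝ) • v = y := by simp [hv]
  rw [h0, h1y] at hFTC
  have hsplit : (∫ s in (0:ℝ)..1, ⟪gradient F (x + s • v), v⟫)
      = ⟪gradient F x, v⟫
        + ∫ s in (0:ℝ)..1, ⟪gradient F (x + s • v) - gradient F x, v⟫ := by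
    rw [intervalIntegral.integral_congr
        (g := fun s => ⟪gradient F x, v⟫ + ⟪gradient F (x + s • v) - gradient F x, v⟫)
        (fun s _ => by simp only [inner_sub_left]; ring),
      intervalIntegral.integral_add intervalIntegrable_const (hcont2.intervalIntegrable _ _)]
    simp
  have hbound : (∫ s in (0:ℝ)..1, ⟪gradient F (x + s • v) - gradient F x, v⟫)
      ≤ L / 2 * ‖v‖ ^ 2 := by
    have hmono : (∫ s in (0:ℝ)..1, ⟪gradient F (x + s • v) - gradient F x, v⟫)
        ≤ ∫ s in (0:ℝ)..1, (L * ‖v‖ ^ 2) * s := by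
      refine intervalIntegral.integral_mono_on (by norm_num)
        (hcont2.intervalIntegrable _ _)
        ((continuous_const.mul continuous_id).intervalIntegrable _ _) ?_
      intro s hs
      calc ⟪gradient F (x + s • v) - gradient F x, v⟫
          ≤ ‖gradient F (x + s • v) - gradient F x‖ * ‖v‖ := real_inner_le_norm _ _
        _ ≤ (L * ‖x + s • v - x‖) * ‖v‖ :=
            mul_le_mul_of_nonneg_right (hlip _ _) (norm_nonneg _)
        _ = (L * ‖v‖ ^ 2) * s := by
            have h3 : x + s • v - x = s • v := by abel
            rw [h3, norm_smul, Real.norm_eq_abs, abs_of_nonneg hs.1]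
            ring
    calc _ ≤ ∫ s in (0:ℝ)..1, (L * ‖v‖ ^ 2) * s := hmono
      _ = L / 2 * ‖v‖ ^ 2 := by
          rw [intervalIntegral.integral_const_mul, integral_id]
          ring
  linarith [hFTC, hsplit, hbound]

lemma euclid_coord_sq_le {d : ℕ} (x : EuclideanSpace ℝ (Fin d)) (i : Fin d) :
    x i ^ 2 ≤ ‖x‖ ^ 2 := by
  rw [EuclideanSpace.norm_eq, Real.sq_sqrt (Finset.sum_nonneg fun _ _ => sq_nonneg _)]
  simpa [Real.norm_eq_abs, sq_abs] using
    Finset.single_le_sum (f := fun j => ‖x j‖ ^ 2) (fun j _ => sq_nonneg _) (Finset.mem_univ i)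

lemma cross_zero {d : ℕ} {Ω : Type*} [mΩ : MeasurableSpace Ω] (μ : Measure Ω)
    [IsProbabilityMeasure μ]
    (X : Ω → EuclideanSpace ℝ (Fin d)) (hX : Measurable X)
    (u G : Ω → EuclideanSpace ℝ (Fin d))
    (hum : StronglyMeasurable[MeasurableSpace.comap X inferInstance] u)
    (hGm : AEStronglyMeasurable G μ)
    (hG_int : Integrable G μ) (hu_int : Integrable u μ)
    (husq : Integrable (fun ω => ‖u ω‖ ^ 2) μ)
    (hhsq : Integrable (fun ω => ‖G ω - u ω‖ ^ 2) μ)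
    (hcond : μ[G | MeasurableSpace.comap X inferInstance] =ᵐ[μ] u) :
    ∫ ω, ⟪u ω, G ω - u ω⟫ ∂μ = 0 := by
  have hm : MeasurableSpace.comap X inferInstance ≤ mΩ := hX.comap_le
  haveI : IsFiniteMeasure (μ.trim hm) := isFiniteMeasure_trim hm
  haveI : SigmaFinite (μ.trim hm) := inferInstance
  set h : Ω → EuclideanSpace ℝ (Fin d) := fun ω => G ω - u ω with hhdef
  have hu_ae : AEStronglyMeasurable u μ := (hum.mono hm).aestronglyMeasurable
  have hh_int : Integrable h μ := hG_int.sub hu_int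
  have hhm : AEStronglyMeasurable h μ := hGm.sub hu_ae
  -- set integrals of h vanish
  have hset : ∀ s, MeasurableSet[MeasurableSpace.comap X inferInstance] s → ∫ ω in s, h ω ∂μ = 0 := by
    intro s hs
    have h1 : ∫ ω in s, G ω ∂μ = ∫ ω in s, u ω ∂μ := by
      rw [← setIntegral_condExp hm hG_int hs]
      exact integral_congr_ae (ae_restrict_of_ae hcond)
    rw [integral_sub hG_int.integrableOn hu_int.integrableOn, h1, sub_self]
  have hi_int : ∀ i, Integrable (fun ω => h ω i) μ := by
    intro i
    simpa using
      (EuclideanSpace.proj i : EuclideanSpace ℝ (Fin d) →L[ℝ] ℝ).integrable_comp hh_int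
  -- coordinatewise conditional expectation of h is 0
  have hcoord : ∀ i, μ[(fun ω => h ω i) | MeasurableSpace.comap X inferInstance] =ᵐ[μ] fun _ => (0 : ℝ) := by
    intro i
    refine (ae_eq_condExp_of_forall_setIntegral_eq hm (hi_int i)
      (fun s _ _ => (integrable_zero _ _ _).integrableOn) ?_
      (stronglyMeasurable_const.aestronglyMeasurable)).symm
    intro s hs _
    have h2 : ∫ ω in s, h ω i ∂μ
        = (EuclideanSpace.proj i : EuclideanSpace ℝ (Fin d) →L[ℝ] ℝ) (∫ ω in s, h ω ∂μ) := by
      rw [← ContinuousLinearMap.integral_comp_comm _ hh_int.integrableOn]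
      simp
    rw [h2, hset s hs]
    simp
  -- products are integrable
  have habs : ∀ (a b : EuclideanSpace ℝ (Fin d)) (i : Fin d),
      ‖a i * b i‖ ≤ (‖a‖ ^ 2 + ‖b‖ ^ 2) / 2 := by
    intro a b i
    have h1 := euclid_coord_sq_le a i
    have h2 := euclid_coord_sq_le b i
    rw [Real.norm_eq_abs, abs_mul]
    nlinarith [sq_abs (a i), sq_abs (b i), sq_nonneg (|a i| - |b i|), abs_nonneg (a i),
      abs_nonneg (b i)]
  have hprod : ∀ i, Integrable (fun ω => u ω i * h ω i) μ := by
    intro i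
    refine Integrable.mono' ((husq.add hhsq).div_const 2) ?_ ?_
    · have h1 : AEStronglyMeasurable (fun ω => u ω i) μ := by
        simpa using
          ((EuclideanSpace.proj i : EuclideanSpace ℝ (Fin d) →L[ℝ] ℝ).continuous.comp_aestronglyMeasurable hu_ae)
      have h2 : AEStronglyMeasurable (fun ω => h ω i) μ := by
        simpa using
          ((EuclideanSpace.proj i : EuclideanSpace ℝ (Fin d) →L[ℝ] ℝ).continuous.comp_aestronglyMeasurable hhm)
      exact h1.mul h2
    · exact Filter.Eventually.of_forall fun ω => habs (u ω) (h ω) i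
  have hui_m : ∀ i, StronglyMeasurable[MeasurableSpace.comap X inferInstance] fun ω => u ω i := fun i =>
    (EuclideanSpace.proj i : EuclideanSpace ℝ (Fin d) →L[ℝ] ℝ).continuous.comp_stronglyMeasurable hum
  have hterm : ∀ i, ∫ ω, u ω i * h ω i ∂μ = 0 := by
    intro i
    rw [← integral_condExp hm (f := fun ω => u ω i * h ω i)]
    have h1 : μ[(fun ω => u ω i * h ω i) | MeasurableSpace.comap X inferInstance]
        =ᵐ[μ] fun ω => u ω i * (μ[(fun ω' => h ω' i) | MeasurableSpace.comap X inferInstance]) ω :=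
      condExp_mul_of_stronglyMeasurable_left (hui_m i) (hprod i) (hi_int i)
    rw [integral_congr_ae h1]
    have h3 : (fun ω => u ω i * (μ[(fun ω' => h ω' i) | MeasurableSpace.comap X inferInstance]) ω) =ᵐ[μ] fun _ => (0 : ℝ) := by
      filter_upwards [hcoord i] with ω hω
      simp [hω]
    rw [integral_congr_ae h3, integral_zero]
  calc ∫ ω, ⟪u ω, h ω⟫ ∂μ = ∫ ω, ∑ i, u ω i * h ω i ∂μ := by
        refine integral_congr_ae (Filter.Eventually.of_forall fun ω => ?_)
        simp [PiLp.inner_apply, RCLike.inner_apply, mul_comm]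
    _ = ∑ i, ∫ ω, u ω i * h ω i ∂μ := integral_finset_sum _ fun i _ => hprod i
    _ = 0 := by simp [hterm]

set_option maxHeartbeats 1000000 in
/-- SGD convergence rate for an `L`-smooth objective with unbiased stochastic gradients
of conditional variance at most `σ²` and step size `η < 2/L`. -/
theorem sgd_convergence_rate {d : ℕ}
    {Ω : Type*} [mΩ : MeasurableSpace Ω] (μ : Measure Ω) [IsProbabilityMeasure μ]
    (F : EuclideanSpace ℝ (Fin d) → ℝ) (L : ℝ) (hL : 0 < L)
    (hdiff : Differentiable ℝ F)
    (hlip : ∀ x y, ‖gradient F x - gradient F y‖ ≤ L * ‖x - y‖)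
    (Fstar : ℝ) (hFstar : ∀ x, Fstar ≤ F x)
    (η : ℝ) (hη : 0 < η) (hηL : η < 2 / L) (σ : ℝ)
    (θ g : ℕ → Ω → EuclideanSpace ℝ (Fin d))
    (hθmeas : ∀ t, Measurable (θ t)) (hgmeas : ∀ t, Measurable (g t))
    (hg_int : ∀ t, Integrable (g t) μ)
    (hF_int : ∀ t, Integrable (fun ω => F (θ t ω)) μ)
    (hgrad_int : ∀ t, Integrable (fun ω => ‖gradient F (θ t ω)‖ ^ 2) μ)
    (hvar_int : ∀ t, Integrable (fun ω => ‖g t ω - gradient F (θ t ω)‖ ^ 2) μ)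
    (hstep : ∀ t ω, θ (t + 1) ω = θ t ω - η • g t ω)
    (hunbiased : ∀ t,
      μ[g t | MeasurableSpace.comap (θ t) inferInstance]
        =ᵐ[μ] fun ω => gradient F (θ t ω))
    (hvar : ∀ t, ∀ᵐ ω ∂μ,
      (μ[(fun ω' => ‖g t ω' - gradient F (θ t ω')‖ ^ 2) |
          MeasurableSpace.comap (θ t) inferInstance]) ω ≤ σ ^ 2)
    (θ₀ : EuclideanSpace ℝ (Fin d)) (hθ₀ : ∀ ω, θ 0 ω = θ₀)
    (T : ℕ) (hT : 0 < T) :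
    (1 / (T : ℝ)) * ∑ t ∈ Finset.range T, ∫ ω, ‖gradient F (θ t ω)‖ ^ 2 ∂μ ≤
      2 * (F θ₀ - Fstar) / (η * T * (2 - η * L)) + η * L * σ ^ 2 / (2 - η * L) := by
  have hL' : 0 ≤ L := hL.le
  have hηL2 : η * L < 2 := by
    have := (lt_div_iff₀ hL).mp hηL
    linarith
  have hc : 0 < 2 - η * L := by linarith
  have hgc : Continuous (gradient F) :=
    (LipschitzWith.of_dist_le_mul (K := ⟨L, hL'⟩) fun a b => by
      simp only [dist_eq_norm, NNReal.coe_mk]; exact hlip a b).continuous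
  have hm : ∀ t, MeasurableSpace.comap (θ t) inferInstance ≤ mΩ := fun t =>
    (hθmeas t).comap_le
  have hum : ∀ t, StronglyMeasurable[MeasurableSpace.comap (θ t) inferInstance]
      fun ω => gradient F (θ t ω) := fun t =>
    hgc.comp_stronglyMeasurable (Measurable.of_comap_le le_rfl).stronglyMeasurable
  have hu_meas : ∀ t, AEStronglyMeasurable (fun ω => gradient F (θ t ω)) μ := fun t =>
    ((hum t).mono (hm t)).aestronglyMeasurable
  have hu_int : ∀ t, Integrable (fun ω => gradient F (θ t ω)) μ := by
    intro t
    refine Integrable.mono' (((integrable_const (1 : ℝ)).add (hgrad_int t)).div_const 2)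
      (hu_meas t) (Filter.Eventually.of_forall fun ω => ?_)
    simp only [Pi.add_apply]
    nlinarith [norm_nonneg (gradient F (θ t ω)), sq_nonneg (‖gradient F (θ t ω)‖ - 1)]
  have hgsq_int : ∀ t, Integrable (fun ω => ‖g t ω‖ ^ 2) μ := by
    intro t
    refine Integrable.mono' (((hgrad_int t).add (hvar_int t)).const_mul 2)
      ((hgmeas t).norm.pow_const 2).aestronglyMeasurable
      (Filter.Eventually.of_forall fun ω => ?_)
    have he : gradient F (θ t ω) + (g t ω - gradient F (θ t ω)) = g t ω := by abel
    have h2 : ‖g t ω‖ ≤ ‖gradient F (θ t ω)‖ + ‖g t ω - gradient F (θ t ω)‖ :=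
      calc ‖g t ω‖ = ‖gradient F (θ t ω) + (g t ω - gradient F (θ t ω))‖ := by rw [he]
        _ ≤ _ := norm_add_le _ _
    rw [Real.norm_eq_abs, abs_of_nonneg (sq_nonneg _)]
    simp only [Pi.add_apply]
    nlinarith [sq_nonneg (‖gradient F (θ t ω)‖ - ‖g t ω - gradient F (θ t ω)‖),
      mul_self_le_mul_self (norm_nonneg (g t ω)) h2]
  have hinner_int : ∀ t, Integrable (fun ω => ⟪gradient F (θ t ω), g t ω⟫) μ := by
    intro t
    refine Integrable.mono' (((hgrad_int t).add (hgsq_int t)).div_const 2)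
      ((hu_meas t).inner (hgmeas t).aestronglyMeasurable)
      (Filter.Eventually.of_forall fun ω => ?_)
    have h1 := abs_real_inner_le_norm (gradient F (θ t ω)) (g t ω)
    rw [Real.norm_eq_abs]
    simp only [Pi.add_apply]
    nlinarith [sq_nonneg (‖gradient F (θ t ω)‖ - ‖g t ω‖), norm_nonneg (gradient F (θ t ω)),
      norm_nonneg (g t ω)]
  have hinner2_int : ∀ t,
      Integrable (fun ω => ⟪gradient F (θ t ω), g t ω - gradient F (θ t ω)⟫) μ := by
    intro t
    refine Integrable.mono' (((hgrad_int t).add (hvar_int t)).div_const 2)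
      ((hu_meas t).inner ((hgmeas t).aestronglyMeasurable.sub (hu_meas t)))
      (Filter.Eventually.of_forall fun ω => ?_)
    have h1 := abs_real_inner_le_norm (gradient F (θ t ω)) (g t ω - gradient F (θ t ω))
    rw [Real.norm_eq_abs]
    simp only [Pi.add_apply]
    nlinarith [sq_nonneg (‖gradient F (θ t ω)‖ - ‖g t ω - gradient F (θ t ω)‖),
      norm_nonneg (gradient F (θ t ω)), norm_nonneg (g t ω - gradient F (θ t ω))]
  have hcross : ∀ t, ∫ ω, ⟪gradient F (θ t ω), g t ω - gradient F (θ t ω)⟫ ∂μ = 0 := fun t =>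
    cross_zero μ (θ t) (hθmeas t) (fun ω => gradient F (θ t ω)) (g t) (hum t)
      (hgmeas t).aestronglyMeasurable (hg_int t) (hu_int t) (hgrad_int t) (hvar_int t)
      (hunbiased t)
  have hvar' : ∀ t, ∫ ω, ‖g t ω - gradient F (θ t ω)‖ ^ 2 ∂μ ≤ σ ^ 2 := by
    intro t
    haveI : IsFiniteMeasure (μ.trim (hm t)) := isFiniteMeasure_trim _
    haveI : SigmaFinite (μ.trim (hm t)) := inferInstance
    rw [← integral_condExp (hm t)
      (f := fun ω' => ‖g t ω' - gradient F (θ t ω')‖ ^ 2)]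
    calc ∫ ω, (μ[(fun ω' => ‖g t ω' - gradient F (θ t ω')‖ ^ 2) |
          MeasurableSpace.comap (θ t) inferInstance]) ω ∂μ
        ≤ ∫ _ω, σ ^ 2 ∂μ := integral_mono_ae integrable_condExp (integrable_const _) (hvar t)
      _ = σ ^ 2 := by simp
  -- inner product with gradient integrates to the squared-gradient integral
  have hinner_eq : ∀ t, ∫ ω, ⟪gradient F (θ t ω), g t ω⟫ ∂μ
      = ∫ ω, ‖gradient F (θ t ω)‖ ^ 2 ∂μ := by
    intro t
    have h1 : ∀ ω, ⟪gradient F (θ t ω), g t ω⟫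
        = ‖gradient F (θ t ω)‖ ^ 2 + ⟪gradient F (θ t ω), g t ω - gradient F (θ t ω)⟫ := by
      intro ω
      rw [inner_sub_right, real_inner_self_eq_norm_sq]
      ring
    rw [integral_congr_ae (Filter.Eventually.of_forall h1),
      integral_add (hgrad_int t) (hinner2_int t), hcross t, add_zero]
  -- second moment bound
  have hsecond : ∀ t, ∫ ω, ‖g t ω‖ ^ 2 ∂μ
      ≤ ∫ ω, ‖gradient F (θ t ω)‖ ^ 2 ∂μ + σ ^ 2 := by
    intro t
    have h1 : ∀ ω, ‖g t ω‖ ^ 2 = ‖gradient F (θ t ω)‖ ^ 2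
        + (2 * ⟪gradient F (θ t ω), g t ω - gradient F (θ t ω)⟫
          + ‖g t ω - gradient F (θ t ω)‖ ^ 2) := by
      intro ω
      have he : gradient F (θ t ω) + (g t ω - gradient F (θ t ω)) = g t ω := by abel
      have := norm_add_sq_real (gradient F (θ t ω)) (g t ω - gradient F (θ t ω))
      rw [he] at this
      linarith
    have i1 : Integrable (fun ω => 2 * ⟪gradient F (θ t ω), g t ω - gradient F (θ t ω)⟫
        + ‖g t ω - gradient F (θ t ω)‖ ^ 2) μ :=
      ((hinner2_int t).const_mul 2).add (hvar_int t)
    rw [integral_congr_ae (Filter.Eventually.of_forall h1),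
      integral_add (hgrad_int t) i1,
      integral_add ((hinner2_int t).const_mul 2) (hvar_int t),
      integral_const_mul, hcross t]
    have := hvar' t
    linarith
  -- one-step descent
  have key : ∀ t, η * (2 - η * L) / 2 * (∫ ω, ‖gradient F (θ t ω)‖ ^ 2 ∂μ)
      ≤ (∫ ω, F (θ t ω) ∂μ) - (∫ ω, F (θ (t + 1) ω) ∂μ) + η ^ 2 * L / 2 * σ ^ 2 := by
    intro t
    have hpt : ∀ ω, F (θ (t + 1) ω) ≤ F (θ t ω) - η * ⟪gradient F (θ t ω), g t ω⟫
        + η ^ 2 * L / 2 * ‖g t ω‖ ^ 2 := by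
      intro ω
      have hd := descent_lemma F L hL' hdiff hlip (θ t ω) (θ (t + 1) ω)
      have hdiffpt : θ (t + 1) ω - θ t ω = -(η • g t ω) := by
        rw [hstep t ω]; abel
      rw [hdiffpt, inner_neg_right, inner_smul_right, norm_neg, norm_smul,
        Real.norm_eq_abs, abs_of_pos hη, mul_pow] at hd
      nlinarith [hd]
    have hrhs_int : Integrable (fun ω => F (θ t ω) - η * ⟪gradient F (θ t ω), g t ω⟫
        + η ^ 2 * L / 2 * ‖g t ω‖ ^ 2) μ :=
      ((hF_int t).sub ((hinner_int t).const_mul η)).add ((hgsq_int t).const_mul _)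
    have hle := integral_mono (hF_int (t + 1)) hrhs_int hpt
    have i2 : Integrable (fun ω => F (θ t ω) - η * ⟪gradient F (θ t ω), g t ω⟫) μ :=
      (hF_int t).sub ((hinner_int t).const_mul η)
    have hRHS : ∫ ω, (F (θ t ω) - η * ⟪gradient F (θ t ω), g t ω⟫
          + η ^ 2 * L / 2 * ‖g t ω‖ ^ 2) ∂μ
        = (∫ ω, F (θ t ω) ∂μ) - η * (∫ ω, ‖gradient F (θ t ω)‖ ^ 2 ∂μ)
          + η ^ 2 * L / 2 * (∫ ω, ‖g t ω‖ ^ 2 ∂μ) := by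
      rw [integral_add i2 ((hgsq_int t).const_mul _),
        integral_sub (hF_int t) ((hinner_int t).const_mul η),
        integral_const_mul, integral_const_mul, hinner_eq t]
    rw [hRHS] at hle
    have h2 := hsecond t
    have h5 : η ^ 2 * L / 2 * (∫ ω, ‖g t ω‖ ^ 2 ∂μ)
        ≤ η ^ 2 * L / 2 * ((∫ ω, ‖gradient F (θ t ω)‖ ^ 2 ∂μ) + σ ^ 2) :=
      mul_le_mul_of_nonneg_left h2 (by positivity)
    nlinarith [hle, h5]
  -- telescoping sum
  have hsum : η * (2 - η * L) / 2 * ∑ t ∈ Finset.range T, ∫ ω, ‖gradient F (θ t ω)‖ ^ 2 ∂μ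
      ≤ (F θ₀ - Fstar) + T * (η ^ 2 * L / 2 * σ ^ 2) := by
    have h1 : ∑ t ∈ Finset.range T, η * (2 - η * L) / 2 * (∫ ω, ‖gradient F (θ t ω)‖ ^ 2 ∂μ)
        ≤ ∑ t ∈ Finset.range T, ((∫ ω, F (θ t ω) ∂μ) - (∫ ω, F (θ (t + 1) ω) ∂μ)
          + η ^ 2 * L / 2 * σ ^ 2) :=
      Finset.sum_le_sum fun t _ => key t
    rw [← Finset.mul_sum] at h1
    rw [Finset.sum_add_distrib, Finset.sum_const, Finset.card_range, nsmul_eq_mul,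
      Finset.sum_range_sub' (f := fun t => ∫ ω, F (θ t ω) ∂μ)] at h1
    have hS0 : ∫ ω, F (θ 0 ω) ∂μ = F θ₀ := by
      have : (fun ω => F (θ 0 ω)) = fun _ => F θ₀ := funext fun ω => by rw [hθ₀]
      rw [this, integral_const]
      simp
    have hST : Fstar ≤ ∫ ω, F (θ T ω) ∂μ := by
      have : Fstar = ∫ _ω, Fstar ∂μ := by simp
      rw [this]
      exact integral_mono (integrable_const _) (hF_int T) fun ω => hFstar _
    rw [hS0] at h1
    linarith
  -- final algebra
  have hT' : (0 : ℝ) < T := by exact_mod_cast hT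
  set Sg := ∑ t ∈ Finset.range T, ∫ ω, ‖gradient F (θ t ω)‖ ^ 2 ∂μ with hSg
  set R := 2 * (F θ₀ - Fstar) / (η * T * (2 - η * L)) + η * L * σ ^ 2 / (2 - η * L) with hR
  have hcpos : 0 < η * (2 - η * L) / 2 := by positivity
  have hTcR : (T : ℝ) * (η * (2 - η * L) / 2) * R
      = (F θ₀ - Fstar) + T * (η ^ 2 * L / 2 * σ ^ 2) := by
    rw [hR]
    field_simp
  have h3 : η * (2 - η * L) / 2 * Sg ≤ η * (2 - η * L) / 2 * ((T : ℝ) * R) := by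
    rw [show η * (2 - η * L) / 2 * ((T : ℝ) * R) = (T : ℝ) * (η * (2 - η * L) / 2) * R by ring,
      hTcR]
    exact hsum
  have h4 : Sg ≤ (T : ℝ) * R := le_of_mul_le_mul_left h3 hcpos
  rw [one_div, inv_mul_le_iff₀ hT']
  exact h4
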